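/- Let g ∈ Lip(ℝ) satisfy g(x) ≥ g(−1) for all x ∈ ℝ and g(x) ≥ x + 1 + g(−1) for all x ∈ [−1,0]. Then for every ε ∈ (0, 1/4), (4πε)^{−1/2} ∫_ℝ e^{−y²/(4ε)} g(y−1) dy − g(−1) ≥ ((e−1)/(√π · e)) √ε. -/

import Mathlib

noncomputable section

open MeasureTheory

/-- If `g` is Lipschitz on `ℝ`, `g(x) ≥ g(-1)` for all `x`, and
`g(x) ≥ x + 1 + g(-1)` on `[-1,0]`, then for every `ε ∈ (0,1/4)`,
`(4πε)^{-1/2} ∫_ℝ e^{-y²/(4ε)} g(y-1) dy - g(-1) ≥ ((e-1)/(√π e)) √ε`. -/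
theorem statement4
    (g : ℝ → ℝ) (K : NNReal) (hg : LipschitzWith K g)
    (hmin : ∀ x : ℝ, g (-1) ≤ g x)
    (hlin : ∀ x ∈ Set.Icc (-1:ℝ) 0, x + 1 + g (-1) ≤ g x)
    (ε : ℝ) (hε : ε ∈ Set.Ioo (0:ℝ) (1/4)) :
    (Real.exp 1 - 1) / (Real.sqrt Real.pi * Real.exp 1) * Real.sqrt ε
      ≤ (Real.sqrt (4 * Real.pi * ε))⁻¹
          * (∫ y : ℝ, Real.exp (-(y ^ 2) / (4 * ε)) * g (y - 1)) - g (-1) := by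
  obtain ⟨hε0, hε4⟩ := hε
  set c := g (-1) with hc
  set b : ℝ := (4 * ε)⁻¹ with hbdef
  have hb : (0:ℝ) < b := by positivity
  have hb1 : (1:ℝ) ≤ b := by
    rw [hbdef, le_inv_comm₀ one_pos (by linarith)]
    linarith
  have hrw : ∀ y : ℝ, Real.exp (-(y ^ 2) / (4 * ε)) = Real.exp (-b * y ^ 2) := by
    intro y
    congr 1
    rw [hbdef]
    field_simp
  -- Integrability of the main integrand
  have hexp : Integrable fun y : ℝ => Real.exp (-b * y ^ 2) := integrable_exp_neg_mul_sq hb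
  have hyexp : Integrable fun y : ℝ => y * Real.exp (-b * y ^ 2) :=
    integrable_mul_exp_neg_mul_sq hb
  have hcont : Continuous fun y : ℝ => Real.exp (-b * y ^ 2) * g (y - 1) := by
    exact (Real.continuous_exp.comp (by continuity)).mul
      (hg.continuous.comp (by continuity))
  have hbound : Integrable fun y : ℝ =>
      Real.exp (-b * y ^ 2) * |c| + (K : ℝ) * (|y| * Real.exp (-b * y ^ 2)) := by
    refine Integrable.add (hexp.mul_const _) (Integrable.const_mul ?_ _)
    have := hyexp.abs
    simpa [abs_mul, abs_of_pos (Real.exp_pos _)] using this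
  have hF : Integrable fun y : ℝ => Real.exp (-b * y ^ 2) * g (y - 1) := by
    refine hbound.mono' hcont.aestronglyMeasurable (Filter.Eventually.of_forall fun y => ?_)
    have h1 : |g (y - 1)| ≤ |c| + (K : ℝ) * |y| := by
      have := hg.dist_le_mul (y - 1) (-1)
      rw [Real.dist_eq, Real.dist_eq] at this
      have h2 : |y - 1 - (-1)| = |y| := by ring_nf
      rw [h2] at this
      calc |g (y - 1)| ≤ |g (y - 1) - c| + |c| := by
            simpa using abs_add_le (g (y - 1) - c) c
        _ ≤ (K : ℝ) * |y| + |c| := by exact add_le_add_left this _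
        _ = |c| + (K : ℝ) * |y| := by ring
    have hpos := (Real.exp_pos (-b * y ^ 2)).le
    rw [Real.norm_eq_abs, abs_mul, abs_of_nonneg hpos]
    calc Real.exp (-b * y ^ 2) * |g (y - 1)|
        ≤ Real.exp (-b * y ^ 2) * (|c| + (K : ℝ) * |y|) := by
          exact mul_le_mul_of_nonneg_left h1 hpos
      _ = Real.exp (-b * y ^ 2) * |c| + (K : ℝ) * (|y| * Real.exp (-b * y ^ 2)) := by ring
  -- the nonneg part h
  set h : ℝ → ℝ := fun y => Real.exp (-b * y ^ 2) * (g (y - 1) - c) with hhdef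
  have hhint : Integrable h := by
    have : h = fun y => Real.exp (-b * y ^ 2) * g (y - 1) - Real.exp (-b * y ^ 2) * c := by
      funext y; simp [hhdef]; ring
    rw [this]
    exact hF.sub (hexp.mul_const _)
  have hhnn : ∀ y, 0 ≤ h y := fun y =>
    mul_nonneg (Real.exp_pos _).le (by have := hmin (y - 1); linarith)
  -- lower bound of ∫ h by the piece on Ioc 0 1
  have hstep1 : ∫ y in Set.Ioc (0:ℝ) 1, h y ≤ ∫ y, h y :=
    setIntegral_le_integral hhint (Filter.Eventually.of_forall hhnn)
  have hstep2 : ∫ y in Set.Ioc (0:ℝ) 1, y * Real.exp (-b * y ^ 2)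
      ≤ ∫ y in Set.Ioc (0:ℝ) 1, h y := by
    refine setIntegral_mono_on (hyexp.integrableOn) (hhint.integrableOn)
      measurableSet_Ioc fun y hy => ?_
    obtain ⟨hy0, hy1⟩ := hy
    have hx : y - 1 ∈ Set.Icc (-1:ℝ) 0 := ⟨by linarith, by linarith⟩
    have := hlin (y - 1) hx
    have hgy : y ≤ g (y - 1) - c := by linarith
    rw [hhdef, mul_comm y]
    exact mul_le_mul_of_nonneg_left hgy (Real.exp_pos _).le
  -- compute ∫_0^1 y e^{-b y²}
  have hderiv : ∀ y : ℝ, HasDerivAt (fun t : ℝ => -(2 * b)⁻¹ * Real.exp (-b * t ^ 2))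
      (y * Real.exp (-b * y ^ 2)) y := by
    intro y
    have h1 : HasDerivAt (fun t : ℝ => -b * t ^ 2) (-b * (2 * y)) y := by
      simpa using ((hasDerivAt_pow 2 y).const_mul (-b))
    have h2 := (h1.exp).const_mul (-(2 * b)⁻¹)
    refine h2.congr_deriv ?_
    have hb0 : b * b⁻¹ = 1 := mul_inv_cancel₀ hb.ne'
    linear_combination (y * Real.exp (-b * y ^ 2)) * hb0
  have hIoc : ∫ y in Set.Ioc (0:ℝ) 1, y * Real.exp (-b * y ^ 2)
      = (2 * b)⁻¹ * (1 - Real.exp (-b)) := by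
    rw [← intervalIntegral.integral_of_le (by norm_num : (0:ℝ) ≤ 1)]
    rw [intervalIntegral.integral_eq_sub_of_hasDerivAt (fun y _ => hderiv y)
      hyexp.intervalIntegrable]
    simp
    ring
  -- the Gaussian total mass
  have hgauss : ∫ y : ℝ, Real.exp (-b * y ^ 2) = Real.sqrt (4 * Real.pi * ε) := by
    rw [integral_gaussian]
    congr 1
    rw [hbdef]
    field_simp
  -- assemble
  have hsplit : (∫ y : ℝ, Real.exp (-b * y ^ 2) * g (y - 1))
      = (∫ y, h y) + c * Real.sqrt (4 * Real.pi * ε) := by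
    have : (fun y : ℝ => Real.exp (-b * y ^ 2) * g (y - 1))
        = fun y => h y + Real.exp (-b * y ^ 2) * c := by
      funext y; simp [hhdef]; ring
    rw [this, integral_add hhint (hexp.mul_const _), integral_mul_const, hgauss]
    ring
  have hS : (0:ℝ) < Real.sqrt (4 * Real.pi * ε) := Real.sqrt_pos.mpr (by positivity)
  have hexpb : Real.exp (-b) ≤ Real.exp (-1) := Real.exp_le_exp.mpr (by linarith)
  have hlow : (2 * b)⁻¹ * (1 - Real.exp (-1)) ≤ ∫ y, h y := by
    calc (2 * b)⁻¹ * (1 - Real.exp (-1))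
        ≤ (2 * b)⁻¹ * (1 - Real.exp (-b)) := by
          apply mul_le_mul_of_nonneg_left (by linarith) (by positivity)
      _ = ∫ y in Set.Ioc (0:ℝ) 1, y * Real.exp (-b * y ^ 2) := hIoc.symm
      _ ≤ ∫ y in Set.Ioc (0:ℝ) 1, h y := hstep2
      _ ≤ ∫ y, h y := hstep1
  -- rewrite the goal
  have hgoalI : (∫ y : ℝ, Real.exp (-(y ^ 2) / (4 * ε)) * g (y - 1))
      = ∫ y : ℝ, Real.exp (-b * y ^ 2) * g (y - 1) := by
    congr 1; funext y; rw [hrw]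
  rw [hgoalI, hsplit]
  have h2b : (2 * b)⁻¹ = 2 * ε := by
    rw [hbdef]; field_simp; ring
  rw [h2b] at hlow
  have key : (Real.exp 1 - 1) / (Real.sqrt Real.pi * Real.exp 1) * Real.sqrt ε
      = (Real.sqrt (4 * Real.pi * ε))⁻¹ * (2 * ε * (1 - Real.exp (-1))) := by
    have hsq : Real.sqrt (4 * Real.pi * ε) = 2 * Real.sqrt Real.pi * Real.sqrt ε := by
      rw [show (4 : ℝ) * Real.pi * ε = (2 * Real.sqrt Real.pi * Real.sqrt ε) ^ 2 by
        rw [mul_pow, mul_pow, Real.sq_sqrt Real.pi_pos.le, Real.sq_sqrt hε0.le]; ring]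
      exact Real.sqrt_sq (by positivity)
    have hε' : Real.sqrt ε * Real.sqrt ε = ε := Real.mul_self_sqrt hε0.le
    have hexppos : (0:ℝ) < Real.exp 1 := Real.exp_pos 1
    have hexpinv : Real.exp (-1) = (Real.exp 1)⁻¹ := by
      rw [Real.exp_neg]
    have hπ : (0:ℝ) < Real.sqrt Real.pi := Real.sqrt_pos.mpr Real.pi_pos
    have hεs : (0:ℝ) < Real.sqrt ε := Real.sqrt_pos.mpr hε0
    rw [hsq, hexpinv]
    field_simp
    linear_combination (Real.exp 1 - 1) * hε'
  rw [key]
  have := mul_le_mul_of_nonneg_left hlow (inv_pos.mpr hS).le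
  have hc' : (Real.sqrt (4 * Real.pi * ε))⁻¹ * ((∫ y, h y) + c * Real.sqrt (4 * Real.pi * ε))
      = (Real.sqrt (4 * Real.pi * ε))⁻¹ * (∫ y, h y) + c := by
    field_simp
  rw [hc']
  linarith
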